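/- For all complex numbers s, t, u with Re s > 1, Re t > 1 and Re u > 1, one has S_1(s,t,u) = ∫_0^1 H(s,a) H(t,a) H(u,1−a) da, where H(s,a) := e^{-πis} F(s,1−a) + F(s,a). -/

import Mathlib

open Real Complex

/-- The Tornheim double zeta function, as a double series over positive integers. -/
noncomputable def tornheim (s t u : ℂ) : ℂ :=
  ∑' p : ℕ+ × ℕ+, 1 / ((p.1 : ℂ) ^ s * (p.2 : ℂ) ^ t * ((p.1 : ℂ) + (p.2 : ℂ)) ^ u)

/-- The symmetric Tornheim double zeta function `S₁`. -/
noncomputable def S₁ (s t u : ℂ) : ℂ :=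
  (1 + exp (-π * I * (s + t + u))) * tornheim s t u
    + (exp (-π * I * s) + exp (-π * I * (t + u))) * tornheim u s t
    + (exp (-π * I * t) + exp (-π * I * (u + s))) * tornheim t u s

/-- The symmetric Tornheim double zeta function `S₂`. -/
noncomputable def S₂ (s t u : ℂ) : ℂ :=
  (exp (-π * I * u) + exp (-π * I * (s + t))) * tornheim s t u
    + (exp (-π * I * t) + exp (-π * I * (u + s))) * tornheim u s t
    + (exp (-π * I * s) + exp (-π * I * (t + u))) * tornheim t u s

/-- The symmetric Tornheim double zeta function `S₃`. -/
noncomputable def S₃ (s t u : ℂ) : ℂ :=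
  tornheim s t u + tornheim u s t + tornheim t u s

/-- The symmetric Tornheim double zeta function `S₄`. -/
noncomputable def S₄ (s t u : ℂ) : ℂ :=
  -tornheim s t u + tornheim u s t + tornheim t u s


/-- The periodic zeta function `F(s,a) = Σ_{n≥1} e^{2πina}/n^s`. -/
noncomputable def periodicZeta (s : ℂ) (a : ℝ) : ℂ :=
  ∑' n : ℕ+, Complex.exp (2 * π * I * n * a) / (n : ℂ) ^ s

/-- `H(s,a) = e^{-πis} F(s,1-a) + F(s,a)`. -/
noncomputable def Hfun (s : ℂ) (a : ℝ) : ℂ :=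
  Complex.exp (-π * I * s) * periodicZeta s (1 - a) + periodicZeta s a

noncomputable def eterm (k : ℤ) (a : ℝ) : ℂ := Complex.exp ((2 * π * I * k) * a)

lemma eterm_mul (j k : ℤ) (a : ℝ) : eterm j a * eterm k a = eterm (j + k) a := by
  rw [eterm, eterm, eterm, ← Complex.exp_add]
  congr 1
  push_cast
  ring

lemma norm_eterm (k : ℤ) (a : ℝ) : ‖eterm k a‖ = 1 := by
  have : (2 * (π:ℂ) * I * k) * a = ((2 * π * k * a : ℝ) : ℂ) * I := by push_cast; ring
  rw [eterm, this, Complex.norm_exp_ofReal_mul_I]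

lemma eterm_integral (k : ℤ) :
    ∫ a in (0:ℝ)..1, eterm k a = if k = 0 then 1 else 0 := by
  rcases eq_or_ne k 0 with h | h
  · simp [eterm, h]
  · have hc : (2 * (π:ℂ) * I * k) ≠ 0 := by
      simp [Real.pi_ne_zero, Complex.I_ne_zero, h, Complex.ofReal_ne_zero]
    rw [if_neg h]
    have := integral_exp_mul_complex (a := 0) (b := 1) hc
    simp only [eterm]
    rw [this]
    have h1 : Complex.exp (2 * (π:ℂ) * I * k * 1) = 1 := by
      rw [mul_one]
      have := Complex.exp_int_mul_two_pi_mul_I k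
      rw [← this]; congr 1; ring
    rw [Complex.ofReal_one, Complex.ofReal_zero, mul_zero, Complex.exp_zero, h1, sub_self, zero_div]

noncomputable def cterm (s : ℂ) (a : ℝ) (m : ℕ+) : ℂ :=
  (Complex.exp (-π * I * s) * eterm (-(m:ℤ)) a + eterm (m:ℤ) a) / (m : ℂ) ^ s

lemma norm_pnat_cpow (m : ℕ+) (s : ℂ) : ‖((m:ℕ):ℂ) ^ s‖ = ((m:ℕ):ℝ) ^ s.re :=
  norm_natCast_cpow_of_pos m.pos s

lemma norm_cterm_le (s : ℂ) (a : ℝ) (m : ℕ+) :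
    ‖cterm s a m‖ ≤ (‖Complex.exp (-π * I * s)‖ + 1) * (1 / ((m:ℕ):ℝ) ^ s.re) := by
  rw [cterm, norm_div, norm_pnat_cpow, mul_one_div]
  gcongr
  calc ‖Complex.exp (-π * I * s) * eterm (-(m:ℤ)) a + eterm (m:ℤ) a‖
      ≤ ‖Complex.exp (-π * I * s) * eterm (-(m:ℤ)) a‖ + ‖eterm (m:ℤ) a‖ := norm_add_le _ _
    _ = ‖Complex.exp (-π * I * s)‖ + 1 := by
        rw [norm_mul, norm_eterm, norm_eterm]; ring

lemma summable_pnat_rpow {σ : ℝ} (h : 1 < σ) :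
    Summable (fun m : ℕ+ => 1 / ((m:ℕ):ℝ) ^ σ) := by
  have := (summable_one_div_nat_rpow (p := σ)).2 h
  exact this.comp_injective PNat.coe_injective

lemma summable_cterm {s : ℂ} (hs : 1 < s.re) (a : ℝ) :
    Summable (fun m : ℕ+ => cterm s a m) := by
  apply Summable.of_norm_bounded ((summable_pnat_rpow hs).mul_left _)
  exact fun m => norm_cterm_le s a m

lemma pz_eq (s : ℂ) (a : ℝ) : periodicZeta s a = ∑' m : ℕ+, eterm (m:ℤ) a / (m:ℂ) ^ s := by
  unfold periodicZeta eterm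
  refine tsum_congr fun m => ?_
  congr 2

lemma pz_one_sub (s : ℂ) (a : ℝ) :
    periodicZeta s (1 - a) = ∑' m : ℕ+, eterm (-(m:ℤ)) a / (m:ℂ) ^ s := by
  unfold periodicZeta
  refine tsum_congr fun m => ?_
  congr 1
  have : (2 * (π:ℂ) * I * m * ((1 - a : ℝ) : ℂ)) = (m:ℤ) * (2 * π * I) + (2 * π * I * (-(m:ℤ))) * a := by
    push_cast; ring
  rw [this, Complex.exp_add, Complex.exp_int_mul_two_pi_mul_I, one_mul, eterm]
  congr 2
  push_cast
  ring

lemma summable_eterm_div {s : ℂ} (hs : 1 < s.re) (a : ℝ) (c : ℕ+ → ℤ) :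
    Summable (fun m : ℕ+ => eterm (c m) a / (m:ℂ) ^ s) := by
  apply Summable.of_norm_bounded (summable_pnat_rpow hs)
  intro m
  rw [norm_div, norm_eterm, norm_pnat_cpow]

lemma Hfun_eq {s : ℂ} (hs : 1 < s.re) (a : ℝ) : Hfun s a = ∑' m : ℕ+, cterm s a m := by
  rw [Hfun, pz_one_sub, pz_eq, ← tsum_mul_left,
    ← Summable.tsum_add ((summable_eterm_div hs a _).mul_left _) (summable_eterm_div hs a _)]
  congr 1; ext m
  rw [cterm, add_div, mul_div_assoc]

lemma eterm_continuous (k : ℤ) : Continuous (eterm k) := by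
  unfold eterm
  exact Complex.continuous_exp.comp (continuous_const.mul Complex.continuous_ofReal)

lemma eterm3_integral (j k r : ℤ) :
    ∫ a in (0:ℝ)..1, eterm j a * eterm k a * eterm r a = if j + k + r = 0 then 1 else 0 := by
  simp_rw [eterm_mul]
  exact eterm_integral _

lemma integral_c_eterm3 (c : ℂ) (j k r : ℤ) :
    ∫ a in (0:ℝ)..1, c * (eterm j a * eterm k a * eterm r a)
      = if j + k + r = 0 then c else 0 := by
  rw [intervalIntegral.integral_const_mul, eterm3_integral]
  split <;> simp

lemma ii3 (c : ℂ) (j k r : ℤ) :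
    IntervalIntegrable (fun a : ℝ => c * (eterm j a * eterm k a * eterm r a))
      MeasureTheory.volume 0 1 :=
  (continuous_const.mul (((eterm_continuous j).mul (eterm_continuous k)).mul
    (eterm_continuous r))).intervalIntegrable _ _

lemma eterm_one_sub (k : ℤ) (a : ℝ) : eterm k (1 - a) = eterm (-k) a := by
  rw [eterm, eterm]
  have : (2 * (π:ℂ) * I * k) * ((1 - a : ℝ) : ℂ) = k * (2 * π * I) + (2 * π * I * (-k : ℤ)) * a := by
    push_cast; ring
  rw [this, Complex.exp_add, Complex.exp_int_mul_two_pi_mul_I, one_mul]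

lemma cterm_one_sub (u : ℂ) (a : ℝ) (l : ℕ+) :
    cterm u (1 - a) l
      = (Complex.exp (-π * I * u) * eterm (l:ℤ) a + eterm (-(l:ℤ)) a) / (l : ℂ) ^ u := by
  rw [cterm, eterm_one_sub, eterm_one_sub, neg_neg]

noncomputable def trip (s t u : ℂ) (a : ℝ) (q : (ℕ+ × ℕ+) × ℕ+) : ℂ :=
  cterm s a q.1.1 * cterm t a q.1.2 * cterm u (1 - a) q.2

lemma trip_integral (s t u : ℂ) (m n l : ℕ+) :
    ∫ a in (0:ℝ)..1, trip s t u a ((m, n), l)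
      = ((if (l:ℤ) = (m:ℤ) + (n:ℤ) then
            1 + Complex.exp (-π*I*s) * (Complex.exp (-π*I*t) * Complex.exp (-π*I*u)) else 0)
        + (if (m:ℤ) = (n:ℤ) + (l:ℤ) then
            Complex.exp (-π*I*t) + Complex.exp (-π*I*s) * Complex.exp (-π*I*u) else 0)
        + (if (n:ℤ) = (m:ℤ) + (l:ℤ) then
            Complex.exp (-π*I*s) + Complex.exp (-π*I*t) * Complex.exp (-π*I*u) else 0))
        / ((m:ℂ)^s * (n:ℂ)^t * (l:ℂ)^u) := by
  set es := Complex.exp (-π*I*s)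
  set et := Complex.exp (-π*I*t)
  set eu := Complex.exp (-π*I*u)
  have hexp : ∀ a : ℝ, trip s t u a ((m, n), l) =
      (es*(et*eu) * (eterm (-(m:ℤ)) a * eterm (-(n:ℤ)) a * eterm (l:ℤ) a)
       + es*et * (eterm (-(m:ℤ)) a * eterm (-(n:ℤ)) a * eterm (-(l:ℤ)) a)
       + es*eu * (eterm (-(m:ℤ)) a * eterm (n:ℤ) a * eterm (l:ℤ) a)
       + es * (eterm (-(m:ℤ)) a * eterm (n:ℤ) a * eterm (-(l:ℤ)) a)
       + et*eu * (eterm (m:ℤ) a * eterm (-(n:ℤ)) a * eterm (l:ℤ) a)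
       + et * (eterm (m:ℤ) a * eterm (-(n:ℤ)) a * eterm (-(l:ℤ)) a)
       + eu * (eterm (m:ℤ) a * eterm (n:ℤ) a * eterm (l:ℤ) a)
       + (1:ℂ) * (eterm (m:ℤ) a * eterm (n:ℤ) a * eterm (-(l:ℤ)) a))
       * ((m:ℂ)^s * (n:ℂ)^t * (l:ℂ)^u)⁻¹ := by
    intro a
    rw [trip, cterm, cterm, cterm_one_sub, div_mul_div_comm, div_mul_div_comm, div_eq_mul_inv]
    congr 1
    ring
  simp only [hexp]
  rw [intervalIntegral.integral_mul_const,
    intervalIntegral.integral_add ((((((((ii3 _ _ _ _).add (ii3 _ _ _ _)).add (ii3 _ _ _ _)).add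
      (ii3 _ _ _ _)).add (ii3 _ _ _ _)).add (ii3 _ _ _ _)).add (ii3 _ _ _ _))) (ii3 _ _ _ _),
    intervalIntegral.integral_add (((((((ii3 _ _ _ _).add (ii3 _ _ _ _)).add (ii3 _ _ _ _)).add
      (ii3 _ _ _ _)).add (ii3 _ _ _ _)).add (ii3 _ _ _ _))) (ii3 _ _ _ _),
    intervalIntegral.integral_add ((((((ii3 _ _ _ _).add (ii3 _ _ _ _)).add (ii3 _ _ _ _)).add
      (ii3 _ _ _ _)).add (ii3 _ _ _ _))) (ii3 _ _ _ _),
    intervalIntegral.integral_add (((((ii3 _ _ _ _).add (ii3 _ _ _ _)).add (ii3 _ _ _ _)).add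
      (ii3 _ _ _ _))) (ii3 _ _ _ _),
    intervalIntegral.integral_add ((((ii3 _ _ _ _).add (ii3 _ _ _ _)).add (ii3 _ _ _ _)))
      (ii3 _ _ _ _),
    intervalIntegral.integral_add (((ii3 _ _ _ _).add (ii3 _ _ _ _))) (ii3 _ _ _ _),
    intervalIntegral.integral_add ((ii3 _ _ _ _)) (ii3 _ _ _ _)]
  simp only [integral_c_eterm3]
  have hm : 1 ≤ (m:ℤ) := by exact_mod_cast m.one_le
  have hn : 1 ≤ (n:ℤ) := by exact_mod_cast n.one_le
  have hl : 1 ≤ (l:ℤ) := by exact_mod_cast l.one_le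
  have e1 : (-(m:ℤ) + -(n:ℤ) + (l:ℤ) = 0) ↔ ((l:ℤ) = (m:ℤ) + (n:ℤ)) := by omega
  have e2 : (-(m:ℤ) + -(n:ℤ) + -(l:ℤ) = 0) ↔ False := by simp; omega
  have e3 : (-(m:ℤ) + (n:ℤ) + (l:ℤ) = 0) ↔ ((m:ℤ) = (n:ℤ) + (l:ℤ)) := by omega
  have e4 : (-(m:ℤ) + (n:ℤ) + -(l:ℤ) = 0) ↔ ((n:ℤ) = (m:ℤ) + (l:ℤ)) := by omega
  have e5 : ((m:ℤ) + -(n:ℤ) + (l:ℤ) = 0) ↔ ((n:ℤ) = (m:ℤ) + (l:ℤ)) := by omega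
  have e6 : ((m:ℤ) + -(n:ℤ) + -(l:ℤ) = 0) ↔ ((m:ℤ) = (n:ℤ) + (l:ℤ)) := by omega
  have e7 : ((m:ℤ) + (n:ℤ) + (l:ℤ) = 0) ↔ False := by simp; omega
  have e8 : ((m:ℤ) + (n:ℤ) + -(l:ℤ) = 0) ↔ ((l:ℤ) = (m:ℤ) + (n:ℤ)) := by omega
  rw [div_eq_mul_inv]
  simp only [e1, e2, e3, e4, e5, e6, e7, e8, if_false]
  congr 1
  split_ifs <;> ring

lemma summable_norm_cterm {s : ℂ} (hs : 1 < s.re) (a : ℝ) :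
    Summable (fun m : ℕ+ => ‖cterm s a m‖) :=
  Summable.of_nonneg_of_le (fun _ => norm_nonneg _) (fun m => norm_cterm_le s a m)
    ((summable_pnat_rpow hs).mul_left _)

lemma summable_norm_pair {s t : ℂ} (hs : 1 < s.re) (ht : 1 < t.re) (a : ℝ) :
    Summable (fun z : ℕ+ × ℕ+ => ‖cterm s a z.1 * cterm t a z.2‖) :=
  (summable_norm_cterm hs a).mul_norm (summable_norm_cterm ht a)

lemma Hprod_eq {s t u : ℂ} (hs : 1 < s.re) (ht : 1 < t.re) (hu : 1 < u.re) (a : ℝ) :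
    Hfun s a * Hfun t a * Hfun u (1 - a) = ∑' q : (ℕ+ × ℕ+) × ℕ+, trip s t u a q := by
  rw [Hfun_eq hs, Hfun_eq ht, Hfun_eq hu,
    tsum_mul_tsum_of_summable_norm (summable_norm_cterm hs a) (summable_norm_cterm ht a),
    tsum_mul_tsum_of_summable_norm (summable_norm_pair hs ht a) (summable_norm_cterm hu (1-a))]
  rfl

lemma cterm_continuous (s : ℂ) (m : ℕ+) : Continuous (fun a => cterm s a m) :=
  ((continuous_const.mul (eterm_continuous _)).add (eterm_continuous _)).div_const _

lemma trip_continuous (s t u : ℂ) (q : (ℕ+ × ℕ+) × ℕ+) :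
    Continuous (fun a => trip s t u a q) :=
  ((cterm_continuous s q.1.1).mul (cterm_continuous t q.1.2)).mul
    ((cterm_continuous u q.2).comp (continuous_const.sub continuous_id))

noncomputable def bnd1 (s : ℂ) (m : ℕ+) : ℝ :=
  (‖Complex.exp (-π * I * s)‖ + 1) * (1 / ((m:ℕ):ℝ) ^ s.re)

lemma bnd1_nonneg (s : ℂ) (m : ℕ+) : 0 ≤ bnd1 s m := by
  unfold bnd1; positivity

lemma summable_bnd1 {s : ℂ} (hs : 1 < s.re) : Summable (bnd1 s) :=
  (summable_pnat_rpow hs).mul_left _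

lemma norm_trip_le (s t u : ℂ) (a : ℝ) (q : (ℕ+ × ℕ+) × ℕ+) :
    ‖trip s t u a q‖ ≤ bnd1 s q.1.1 * bnd1 t q.1.2 * bnd1 u q.2 := by
  rw [trip, norm_mul, norm_mul]
  have h1 := norm_cterm_le s a q.1.1
  have h2 := norm_cterm_le t a q.1.2
  have h3 := norm_cterm_le u (1 - a) q.2
  unfold bnd1
  exact mul_le_mul (mul_le_mul h1 h2 (norm_nonneg _) (by positivity)) h3 (norm_nonneg _)
    (by positivity)

lemma summable_bnd {s t u : ℂ} (hs : 1 < s.re) (ht : 1 < t.re) (hu : 1 < u.re) :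
    Summable (fun q : (ℕ+ × ℕ+) × ℕ+ => bnd1 s q.1.1 * bnd1 t q.1.2 * bnd1 u q.2) := by
  have hp : Summable (fun w : ℕ+ × ℕ+ => bnd1 s w.1 * bnd1 t w.2) :=
    Summable.mul_of_nonneg (summable_bnd1 hs) (summable_bnd1 ht) (bnd1_nonneg s) (bnd1_nonneg t)
  exact Summable.mul_of_nonneg hp (summable_bnd1 hu)
    (fun w => mul_nonneg (bnd1_nonneg s w.1) (bnd1_nonneg t w.2)) (bnd1_nonneg u)

lemma tsum_swap_integral {s t u : ℂ} (hs : 1 < s.re) (ht : 1 < t.re) (hu : 1 < u.re) :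
    ∫ a in (0:ℝ)..1, ∑' q : (ℕ+ × ℕ+) × ℕ+, trip s t u a q
      = ∑' q : (ℕ+ × ℕ+) × ℕ+, ∫ a in (0:ℝ)..1, trip s t u a q := by
  rw [intervalIntegral.integral_of_le zero_le_one]
  rw [MeasureTheory.integral_tsum
    (fun q => ((trip_continuous s t u q).aestronglyMeasurable).restrict)]
  · exact tsum_congr fun q => (intervalIntegral.integral_of_le zero_le_one).symm
  · have hbd : ∀ q : (ℕ+ × ℕ+) × ℕ+,
        (∫⁻ a in Set.Ioc (0:ℝ) 1, ‖trip s t u a q‖₊ ∂MeasureTheory.volume)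
          ≤ ENNReal.ofReal (bnd1 s q.1.1 * bnd1 t q.1.2 * bnd1 u q.2) := by
      intro q
      calc ∫⁻ a in Set.Ioc (0:ℝ) 1, ‖trip s t u a q‖₊ ∂MeasureTheory.volume
          ≤ ∫⁻ _ in Set.Ioc (0:ℝ) 1,
              ENNReal.ofReal (bnd1 s q.1.1 * bnd1 t q.1.2 * bnd1 u q.2) ∂MeasureTheory.volume := by
            apply MeasureTheory.lintegral_mono
            intro a
            dsimp only
            rw [← ENNReal.ofReal_coe_nnreal, coe_nnnorm]
            exact ENNReal.ofReal_le_ofReal (norm_trip_le s t u a q)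
        _ = ENNReal.ofReal (bnd1 s q.1.1 * bnd1 t q.1.2 * bnd1 u q.2) := by
            rw [MeasureTheory.setLIntegral_const, Real.volume_Ioc]
            norm_num
    refine ne_top_of_le_ne_top ?_ (ENNReal.tsum_le_tsum hbd)
    rw [← ENNReal.ofReal_tsum_of_nonneg
      (fun q => mul_nonneg (mul_nonneg (bnd1_nonneg _ _) (bnd1_nonneg _ _)) (bnd1_nonneg _ _))
      (summable_bnd hs ht hu)]
    exact ENNReal.ofReal_ne_top

lemma summable_torn {s t u : ℂ} (hs : 1 < s.re) (ht : 1 < t.re) (hu : 0 ≤ u.re) :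
    Summable (fun q : ℕ+ × ℕ+ => 1 / ((q.1:ℂ)^s * (q.2:ℂ)^t * ((q.1:ℂ)+(q.2:ℂ))^u)) := by
  apply Summable.of_norm
  refine Summable.of_nonneg_of_le (fun _ => norm_nonneg _) (fun q => ?_)
    (Summable.mul_of_nonneg (summable_pnat_rpow hs) (summable_pnat_rpow ht)
      (fun m => by positivity) (fun n => by positivity))
  have hA : (0:ℝ) < ((q.1:ℕ):ℝ)^s.re := Real.rpow_pos_of_pos (by exact_mod_cast q.1.pos) _
  have hB : (0:ℝ) < ((q.2:ℕ):ℝ)^t.re := Real.rpow_pos_of_pos (by exact_mod_cast q.2.pos) _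
  have hz : (1:ℝ) ≤ ‖((q.1:ℂ)+(q.2:ℂ))^u‖ := by
    have hc : ((q.1:ℂ)+(q.2:ℂ)) = (((q.1:ℕ)+(q.2:ℕ) : ℕ):ℂ) := by push_cast; ring
    rw [hc, norm_natCast_cpow_of_pos (by positivity)]
    have h1x : (1:ℝ) ≤ (((q.1:ℕ)+(q.2:ℕ) : ℕ):ℝ) := by
      have := q.1.one_le
      exact_mod_cast Nat.le_add_right_of_le (by exact_mod_cast this)
    have := Real.rpow_le_rpow zero_le_one h1x hu
    rwa [Real.one_rpow] at this
  rw [norm_div, norm_one, norm_mul, norm_mul, norm_pnat_cpow, norm_pnat_cpow]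
  calc 1 / (((q.1:ℕ):ℝ)^s.re * ((q.2:ℕ):ℝ)^t.re * ‖((q.1:ℂ)+(q.2:ℂ))^u‖)
      ≤ 1 / (((q.1:ℕ):ℝ)^s.re * ((q.2:ℕ):ℝ)^t.re) :=
        one_div_le_one_div_of_le (mul_pos hA hB)
          (le_mul_of_one_le_right (mul_pos hA hB).le hz)
    _ = 1 / ((q.1:ℕ):ℝ)^s.re * (1 / ((q.2:ℕ):ℝ)^t.re) := (one_div_mul_one_div _ _).symm

noncomputable def Dq (s t u : ℂ) (q : (ℕ+ × ℕ+) × ℕ+) : ℂ :=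
  (q.1.1:ℂ)^s * (q.1.2:ℂ)^t * (q.2:ℂ)^u

lemma tsum_part1 {s t u : ℂ} (hs : 1 < s.re) (ht : 1 < t.re) (hu : 1 < u.re) (C : ℂ) :
    Summable (fun q : (ℕ+ × ℕ+) × ℕ+ =>
        (if (q.2:ℤ) = (q.1.1:ℤ) + (q.1.2:ℤ) then C else 0) / Dq s t u q)
    ∧ ∑' q : (ℕ+ × ℕ+) × ℕ+,
        (if (q.2:ℤ) = (q.1.1:ℤ) + (q.1.2:ℤ) then C else 0) / Dq s t u q
      = C * tornheim s t u := by
  set f : (ℕ+ × ℕ+) × ℕ+ → ℂ := fun q =>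
    (if (q.2:ℤ) = (q.1.1:ℤ) + (q.1.2:ℤ) then C else 0) / Dq s t u q with hf
  set i1 : ℕ+ × ℕ+ → (ℕ+ × ℕ+) × ℕ+ := fun w => ((w.1, w.2), w.1 + w.2) with hi1
  have hinj : Function.Injective i1 := by
    intro a b h
    simp only [hi1, Prod.mk.injEq] at h
    exact Prod.ext h.1.1 h.1.2
  have hsupp : ∀ p ∉ Set.range i1, f p = 0 := by
    intro p hp
    rw [hf]
    dsimp only
    rw [if_neg, zero_div]
    intro hcond
    apply hp
    refine ⟨(p.1.1, p.1.2), ?_⟩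
    have h2 : p.1.1 + p.1.2 = p.2 := by
      apply PNat.coe_injective
      rw [PNat.add_coe]
      exact_mod_cast hcond.symm
    simp only [hi1, h2]
  have hcomp : ∀ w : ℕ+ × ℕ+, f (i1 w)
      = C * (1 / ((w.1:ℂ)^s * (w.2:ℂ)^t * ((w.1:ℂ)+(w.2:ℂ))^u)) := by
    intro w
    have hcond : (((w.1 + w.2 : ℕ+)):ℤ) = (w.1:ℤ) + (w.2:ℤ) := by
      rw [PNat.add_coe]; push_cast; ring
    have hcast : (((w.1 + w.2 : ℕ+)):ℂ) = (w.1:ℂ) + (w.2:ℂ) := by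
      rw [PNat.add_coe]; push_cast; ring
    rw [hf]
    dsimp only [hi1]
    rw [if_pos hcond, Dq]
    rw [hcast, mul_one_div]
  have hsum : Summable (f ∘ i1) :=
    Summable.congr ((summable_torn hs ht (by linarith)).mul_left C) (fun w => (hcomp w).symm)
  refine ⟨(hinj.summable_iff hsupp).mp hsum, ?_⟩
  rw [← hinj.tsum_eq (Function.support_subset_iff'.mpr hsupp), tsum_congr hcomp,
    tsum_mul_left, tornheim]

lemma tsum_part2 {s t u : ℂ} (hs : 1 < s.re) (ht : 1 < t.re) (hu : 1 < u.re) (C : ℂ) :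
    Summable (fun q : (ℕ+ × ℕ+) × ℕ+ =>
        (if (q.1.1:ℤ) = (q.1.2:ℤ) + (q.2:ℤ) then C else 0) / Dq s t u q)
    ∧ ∑' q : (ℕ+ × ℕ+) × ℕ+,
        (if (q.1.1:ℤ) = (q.1.2:ℤ) + (q.2:ℤ) then C else 0) / Dq s t u q
      = C * tornheim t u s := by
  set f : (ℕ+ × ℕ+) × ℕ+ → ℂ := fun q =>
    (if (q.1.1:ℤ) = (q.1.2:ℤ) + (q.2:ℤ) then C else 0) / Dq s t u q with hf
  set i2 : ℕ+ × ℕ+ → (ℕ+ × ℕ+) × ℕ+ := fun w => ((w.1 + w.2, w.1), w.2) with hi2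
  have hinj : Function.Injective i2 := by
    intro a b h
    simp only [hi2, Prod.mk.injEq] at h
    exact Prod.ext h.1.2 h.2
  have hsupp : ∀ p ∉ Set.range i2, f p = 0 := by
    intro p hp
    rw [hf]
    dsimp only
    rw [if_neg, zero_div]
    intro hcond
    apply hp
    refine ⟨(p.1.2, p.2), ?_⟩
    have h2 : p.1.2 + p.2 = p.1.1 := by
      apply PNat.coe_injective
      rw [PNat.add_coe]
      exact_mod_cast hcond.symm
    simp only [hi2, h2]
  have hcomp : ∀ w : ℕ+ × ℕ+, f (i2 w)
      = C * (1 / ((w.1:ℂ)^t * (w.2:ℂ)^u * ((w.1:ℂ)+(w.2:ℂ))^s)) := by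
    intro w
    have hcond : (((w.1 + w.2 : ℕ+)):ℤ) = (w.1:ℤ) + (w.2:ℤ) := by
      rw [PNat.add_coe]; push_cast; ring
    have hcast : (((w.1 + w.2 : ℕ+)):ℂ) = (w.1:ℂ) + (w.2:ℂ) := by
      rw [PNat.add_coe]; push_cast; ring
    rw [hf]
    dsimp only [hi2]
    rw [if_pos hcond, Dq]
    rw [hcast, mul_one_div]
    congr 1
    ring
  have hsum : Summable (f ∘ i2) :=
    Summable.congr ((summable_torn ht hu (by linarith)).mul_left C) (fun w => (hcomp w).symm)
  refine ⟨(hinj.summable_iff hsupp).mp hsum, ?_⟩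
  rw [← hinj.tsum_eq (Function.support_subset_iff'.mpr hsupp), tsum_congr hcomp,
    tsum_mul_left, tornheim]

lemma tsum_part3 {s t u : ℂ} (hs : 1 < s.re) (ht : 1 < t.re) (hu : 1 < u.re) (C : ℂ) :
    Summable (fun q : (ℕ+ × ℕ+) × ℕ+ =>
        (if (q.1.2:ℤ) = (q.1.1:ℤ) + (q.2:ℤ) then C else 0) / Dq s t u q)
    ∧ ∑' q : (ℕ+ × ℕ+) × ℕ+,
        (if (q.1.2:ℤ) = (q.1.1:ℤ) + (q.2:ℤ) then C else 0) / Dq s t u q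
      = C * tornheim u s t := by
  set f : (ℕ+ × ℕ+) × ℕ+ → ℂ := fun q =>
    (if (q.1.2:ℤ) = (q.1.1:ℤ) + (q.2:ℤ) then C else 0) / Dq s t u q with hf
  set i3 : ℕ+ × ℕ+ → (ℕ+ × ℕ+) × ℕ+ := fun w => ((w.2, w.2 + w.1), w.1) with hi3
  have hinj : Function.Injective i3 := by
    intro a b h
    simp only [hi3, Prod.mk.injEq] at h
    exact Prod.ext h.2 h.1.1
  have hsupp : ∀ p ∉ Set.range i3, f p = 0 := by
    intro p hp
    rw [hf]
    dsimp only
    rw [if_neg, zero_div]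
    intro hcond
    apply hp
    refine ⟨(p.2, p.1.1), ?_⟩
    have h2 : p.1.1 + p.2 = p.1.2 := by
      apply PNat.coe_injective
      rw [PNat.add_coe]
      exact_mod_cast hcond.symm
    simp only [hi3, h2]
  have hcomp : ∀ w : ℕ+ × ℕ+, f (i3 w)
      = C * (1 / ((w.1:ℂ)^u * (w.2:ℂ)^s * ((w.1:ℂ)+(w.2:ℂ))^t)) := by
    intro w
    have hcond : (((w.2 + w.1 : ℕ+)):ℤ) = (w.2:ℤ) + (w.1:ℤ) := by
      rw [PNat.add_coe]; push_cast; ring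
    have hcast : (((w.2 + w.1 : ℕ+)):ℂ) = (w.2:ℂ) + (w.1:ℂ) := by
      rw [PNat.add_coe]; push_cast; ring
    rw [hf]
    dsimp only [hi3]
    rw [if_pos hcond, Dq]
    rw [hcast, mul_one_div]
    congr 1
    simp only [hi3]
    ring
  have hsum : Summable (f ∘ i3) :=
    Summable.congr ((summable_torn hu hs (by linarith)).mul_left C) (fun w => (hcomp w).symm)
  refine ⟨(hinj.summable_iff hsupp).mp hsum, ?_⟩
  rw [← hinj.tsum_eq (Function.support_subset_iff'.mpr hsupp), tsum_congr hcomp,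
    tsum_mul_left, tornheim]

lemma trip_integral' (s t u : ℂ) (q : (ℕ+ × ℕ+) × ℕ+) :
    ∫ a in (0:ℝ)..1, trip s t u a q
      = ((if (q.2:ℤ) = (q.1.1:ℤ) + (q.1.2:ℤ) then
            1 + Complex.exp (-π*I*s) * (Complex.exp (-π*I*t) * Complex.exp (-π*I*u)) else 0)
        + (if (q.1.1:ℤ) = (q.1.2:ℤ) + (q.2:ℤ) then
            Complex.exp (-π*I*t) + Complex.exp (-π*I*s) * Complex.exp (-π*I*u) else 0)
        + (if (q.1.2:ℤ) = (q.1.1:ℤ) + (q.2:ℤ) then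
            Complex.exp (-π*I*s) + Complex.exp (-π*I*t) * Complex.exp (-π*I*u) else 0))
        / ((q.1.1:ℂ)^s * (q.1.2:ℂ)^t * (q.2:ℂ)^u) := by
  obtain ⟨⟨m, n⟩, l⟩ := q
  exact trip_integral s t u m n l

theorem S₁_integral_repr (s t u : ℂ) (hs : 1 < s.re) (ht : 1 < t.re) (hu : 1 < u.re) :
    S₁ s t u = ∫ a in (0 : ℝ)..1, Hfun s a * Hfun t a * Hfun u (1 - a) := by
  have h1 := tsum_part1 hs ht hu
    (1 + Complex.exp (-π*I*s) * (Complex.exp (-π*I*t) * Complex.exp (-π*I*u)))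
  have h2 := tsum_part2 hs ht hu
    (Complex.exp (-π*I*t) + Complex.exp (-π*I*s) * Complex.exp (-π*I*u))
  have h3 := tsum_part3 hs ht hu
    (Complex.exp (-π*I*s) + Complex.exp (-π*I*t) * Complex.exp (-π*I*u))
  have hsplit : ∀ q : (ℕ+ × ℕ+) × ℕ+,
      ((if (q.2:ℤ) = (q.1.1:ℤ) + (q.1.2:ℤ) then
          1 + Complex.exp (-π*I*s) * (Complex.exp (-π*I*t) * Complex.exp (-π*I*u)) else 0)
        + (if (q.1.1:ℤ) = (q.1.2:ℤ) + (q.2:ℤ) then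
            Complex.exp (-π*I*t) + Complex.exp (-π*I*s) * Complex.exp (-π*I*u) else 0)
        + (if (q.1.2:ℤ) = (q.1.1:ℤ) + (q.2:ℤ) then
            Complex.exp (-π*I*s) + Complex.exp (-π*I*t) * Complex.exp (-π*I*u) else 0))
        / ((q.1.1:ℂ)^s * (q.1.2:ℂ)^t * (q.2:ℂ)^u)
      = (if (q.2:ℤ) = (q.1.1:ℤ) + (q.1.2:ℤ) then
          1 + Complex.exp (-π*I*s) * (Complex.exp (-π*I*t) * Complex.exp (-π*I*u)) else 0)
          / Dq s t u q
        + ((if (q.1.1:ℤ) = (q.1.2:ℤ) + (q.2:ℤ) then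
            Complex.exp (-π*I*t) + Complex.exp (-π*I*s) * Complex.exp (-π*I*u) else 0)
            / Dq s t u q
          + (if (q.1.2:ℤ) = (q.1.1:ℤ) + (q.2:ℤ) then
              Complex.exp (-π*I*s) + Complex.exp (-π*I*t) * Complex.exp (-π*I*u) else 0)
              / Dq s t u q) := by
    intro q
    simp only [Dq]
    rw [add_div, add_div, add_assoc]
  simp only [Hprod_eq hs ht hu]
  rw [tsum_swap_integral hs ht hu,
    tsum_congr (trip_integral' s t u),
    tsum_congr hsplit,
    Summable.tsum_add h1.1 (h2.1.add h3.1), Summable.tsum_add h2.1 h3.1, h1.2, h2.2, h3.2, S₁]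
  have m1 : Complex.exp (-π * I * (s + t + u))
      = Complex.exp (-π*I*s) * (Complex.exp (-π*I*t) * Complex.exp (-π*I*u)) := by
    rw [← Complex.exp_add, ← Complex.exp_add]; congr 1; ring
  have m2 : Complex.exp (-π * I * (t + u))
      = Complex.exp (-π*I*t) * Complex.exp (-π*I*u) := by
    rw [← Complex.exp_add]; congr 1; ring
  have m3 : Complex.exp (-π * I * (u + s))
      = Complex.exp (-π*I*s) * Complex.exp (-π*I*u) := by
    rw [← Complex.exp_add]; congr 1; ring
  rw [m1, m2, m3]
  ring
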